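/- For every k ≥ 1: if k is odd, then every Σ¹ₖ-KROM^r formula is equivalent on all finite structures to a Σ¹ₖ₊₁-KROM^r formula and vice versa; and if k is even, then every Π¹ₖ-KROM^r formula is equivalent on all finite structures to a Π¹ₖ₊₁-KROM^r formula and vice versa. -/

import Mathlib

/-- A finite relational vocabulary: a type of relation symbols with arities. -/
structure Vocab where
  Rel : Type
  arity : Rel → ℕ

/-- A structure over a relational vocabulary. -/
structure Struct (σ : Vocab) where
  Dom : Type
  rel : (r : σ.Rel) → (Fin (σ.arity r) → Dom) → Prop

namespace SOKrom

variable {σ : Vocab}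

/-- A valuation of `m` second-order relation variables with arities `ar` over a domain `D`. -/
abbrev Val (m : ℕ) (ar : Fin m → ℕ) (D : Type) := (i : Fin m) → Set (Fin (ar i) → D)

/-- First-order literals over `σ` (atomic or negated atomic, including equality). -/
inductive FOLit (σ : Vocab) : Type
  | pos (r : σ.Rel) (args : Fin (σ.arity r) → ℕ)
  | neg (r : σ.Rel) (args : Fin (σ.arity r) → ℕ)
  | eq (a b : ℕ)
  | ne (a b : ℕ)

def FOLit.Sat (A : Struct σ) (s : ℕ → A.Dom) : FOLit σ → Prop
  | .pos r args => A.rel r (fun i => s (args i))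
  | .neg r args => ¬ A.rel r (fun i => s (args i))
  | .eq a b => s a = s b
  | .ne a b => s a ≠ s b

/-- Second-order literals w.r.t. relation variables `R₀,…,R_{m-1}` of arities `ar`:
`Rᵢ z̄`, `¬ Rᵢ z̄`, `∃z̄ Rᵢ z̄` (revised Krom only) or `⊥`. -/
inductive SOLit (m : ℕ) (ar : Fin m → ℕ) : Type
  | pos (i : Fin m) (args : Fin (ar i) → ℕ)
  | neg (i : Fin m) (args : Fin (ar i) → ℕ)
  | ex (i : Fin m)
  | bot

/-- A second-order literal is a (non-revised) Krom literal iff it is not of the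
form `∃z̄ Rᵢ z̄`. -/
def SOLit.isKrom {m : ℕ} {ar : Fin m → ℕ} : SOLit m ar → Prop
  | .ex _ => False
  | _ => True

def SOLit.Sat {m : ℕ} {ar : Fin m → ℕ} (A : Struct σ) (V : Val m ar A.Dom)
    (s : ℕ → A.Dom) : SOLit m ar → Prop
  | .pos i args => (fun j => s (args j)) ∈ V i
  | .neg i args => (fun j => s (args j)) ∉ V i
  | .ex i => ∃ t, t ∈ V i
  | .bot => False

/-- A (revised) Krom clause: finitely many first-order literals and two
second-order literals. -/
structure Clause (σ : Vocab) (m : ℕ) (ar : Fin m → ℕ) where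
  fo : List (FOLit σ)
  h1 : SOLit m ar
  h2 : SOLit m ar

def Clause.Sat (A : Struct σ) {m : ℕ} {ar : Fin m → ℕ} (V : Val m ar A.Dom)
    (s : ℕ → A.Dom) (C : Clause σ m ar) : Prop :=
  (∃ l ∈ C.fo, l.Sat A s) ∨ C.h1.Sat A V s ∨ C.h2.Sat A V s

/-- An SO-KROM^r formula: a second-order quantifier prefix
`Q₀R₀ ⋯ Q_{m-1}R_{m-1}` (`qt i = true` meaning `∃`, `false` meaning `∀`)
followed by `∀x̄ (C₁ ∧ ⋯ ∧ Cₙ)` where `x̄` are the first-order variables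
with index `< nvars` and the `Cⱼ` are revised Krom clauses. -/
structure KromR (σ : Vocab) where
  m : ℕ
  ar : Fin m → ℕ
  qt : Fin m → Bool
  nvars : ℕ
  clauses : List (Clause σ m ar)

/-- The matrix `∀x̄ (C₁ ∧ ⋯ ∧ Cₙ)` evaluated in environment `e`. -/
def KromR.Matrix (Φ : KromR σ) (A : Struct σ) (V : Val Φ.m Φ.ar A.Dom)
    (e : ℕ → A.Dom) : Prop :=
  ∀ s : ℕ → A.Dom, (∀ j, Φ.nvars ≤ j → s j = e j) → ∀ C ∈ Φ.clauses, C.Sat A V s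

def KromR.satAux (Φ : KromR σ) (A : Struct σ) (e : ℕ → A.Dom)
    (V : Val Φ.m Φ.ar A.Dom) (j : ℕ) : Prop :=
  if h : j < Φ.m then
    if Φ.qt ⟨j, h⟩ then
      ∃ S, Φ.satAux A e (Function.update V ⟨j, h⟩ S) (j + 1)
    else
      ∀ S, Φ.satAux A e (Function.update V ⟨j, h⟩ S) (j + 1)
  else Φ.Matrix A V e
termination_by Φ.m - j

/-- Satisfaction of an SO-KROM^r formula in a structure `A` under a first-order
environment `e`. -/
def KromR.Sat (Φ : KromR σ) (A : Struct σ) (e : ℕ → A.Dom) : Prop :=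
  Φ.satAux A e (fun _ => ∅) 0

/-- `Φ` is a (non-revised) SO-KROM formula iff no clause uses a literal
`∃z̄ Rᵢ z̄`. -/
def KromR.isKrom (Φ : KromR σ) : Prop :=
  ∀ C ∈ Φ.clauses, C.h1.isKrom ∧ C.h2.isKrom

/-- Number of alternations in a quantifier prefix. -/
def altCount : List Bool → ℕ
  | [] => 0
  | [_] => 0
  | a :: b :: l => (if a = b then 0 else 1) + altCount (b :: l)

def KromR.prefixList (Φ : KromR σ) : List Bool := List.ofFn Φ.qt

/-- `Φ` is a `Σ¹ₖ`(-KROM^r) formula: its second-order prefix starts with an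
existential quantifier and alternates `k - 1` times. -/
def KromR.IsSigma (k : ℕ) (Φ : KromR σ) : Prop :=
  Φ.prefixList.head? = some true ∧ altCount Φ.prefixList = k - 1

/-- `Φ` is a `Π¹ₖ`(-KROM^r) formula: its second-order prefix starts with a
universal quantifier and alternates `k - 1` times. -/
def KromR.IsPi (k : ℕ) (Φ : KromR σ) : Prop :=
  Φ.prefixList.head? = some false ∧ altCount Φ.prefixList = k - 1

end SOKrom

namespace SOKrom

variable {σ : Vocab}

/-- First-order formulas over `σ`, possibly with free occurrences of `m`
second-order relation variables of arities `ar`. -/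
inductive FO (σ : Vocab) (m : ℕ) (ar : Fin m → ℕ) : Type
  | rel (r : σ.Rel) (args : Fin (σ.arity r) → ℕ)
  | svar (i : Fin m) (args : Fin (ar i) → ℕ)
  | equal (a b : ℕ)
  | not (φ : FO σ m ar)
  | and (φ ψ : FO σ m ar)
  | or (φ ψ : FO σ m ar)
  | all (v : ℕ) (φ : FO σ m ar)
  | ex (v : ℕ) (φ : FO σ m ar)

def FO.Sat (A : Struct σ) {m : ℕ} {ar : Fin m → ℕ} (V : Val m ar A.Dom) :
    FO σ m ar → (ℕ → A.Dom) → Prop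
  | .rel r args, e => A.rel r (fun i => e (args i))
  | .svar i args, e => (fun j => e (args j)) ∈ V i
  | .equal a b, e => e a = e b
  | .not φ, e => ¬ φ.Sat A V e
  | .and φ ψ, e => φ.Sat A V e ∧ ψ.Sat A V e
  | .or φ ψ, e => φ.Sat A V e ∨ ψ.Sat A V e
  | .all v φ, e => ∀ a, φ.Sat A V (Function.update e v a)
  | .ex v φ, e => ∃ a, φ.Sat A V (Function.update e v a)

/-- A second-order formula in prenex form: a prefix of second-order
quantifiers (`qt i = true` meaning `∃`, `false` meaning `∀`) followed by a
first-order formula. -/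
structure SOForm (σ : Vocab) where
  m : ℕ
  ar : Fin m → ℕ
  qt : Fin m → Bool
  matrix : FO σ m ar

def SOForm.satAux (Φ : SOForm σ) (A : Struct σ) (e : ℕ → A.Dom)
    (V : Val Φ.m Φ.ar A.Dom) (j : ℕ) : Prop :=
  if h : j < Φ.m then
    if Φ.qt ⟨j, h⟩ then
      ∃ S, Φ.satAux A e (Function.update V ⟨j, h⟩ S) (j + 1)
    else
      ∀ S, Φ.satAux A e (Function.update V ⟨j, h⟩ S) (j + 1)
  else Φ.matrix.Sat A V e
termination_by Φ.m - j

def SOForm.Sat (Φ : SOForm σ) (A : Struct σ) (e : ℕ → A.Dom) : Prop :=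
  Φ.satAux A e (fun _ => ∅) 0

/-- `Φ` is a `Σ¹ₖ` second-order formula. -/
def SOForm.IsSigma (k : ℕ) (Φ : SOForm σ) : Prop :=
  (List.ofFn Φ.qt).head? = some true ∧ altCount (List.ofFn Φ.qt) = k - 1

/-- `Φ` is a `Π¹ₖ` second-order formula. -/
def SOForm.IsPi (k : ℕ) (Φ : SOForm σ) : Prop :=
  (List.ofFn Φ.qt).head? = some false ∧ altCount (List.ofFn Φ.qt) = k - 1

/-- `Φ` is a `Π¹₁` formula: a block of universal second-order quantifiers
followed by a first-order formula. -/
def SOForm.IsPi11 (Φ : SOForm σ) : Prop := ∀ i, Φ.qt i = false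

/-! ### Ordered structures -/

/-- The extra symbols of ordered structures: a linear order `≤`, the successor
relation, and the least and greatest elements (as unary predicates). -/
inductive OrdSym : Type
  | le | succ | min | max

def ordArity : OrdSym → ℕ
  | .le => 2
  | .succ => 2
  | .min => 1
  | .max => 1

/-- The vocabulary `σ` enlarged with the order symbols. -/
def withOrder (σ : Vocab) : Vocab where
  Rel := σ.Rel ⊕ OrdSym
  arity := Sum.elim σ.arity ordArity

/-- `A` is an ordered structure: `≤` is interpreted as a linear order of the
domain, `SUCC` as the associated successor relation, and `min`/`max` hold
exactly of the least/greatest elements. -/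
def IsOrdered (A : Struct (withOrder σ)) : Prop :=
  ∃ _ : LinearOrder A.Dom,
    (∀ a b : A.Dom, A.rel (Sum.inr OrdSym.le) ![a, b] ↔ a ≤ b) ∧
    (∀ a b : A.Dom, A.rel (Sum.inr OrdSym.succ) ![a, b] ↔
      (a < b ∧ ∀ c, ¬(a < c ∧ c < b))) ∧
    (∀ a : A.Dom, A.rel (Sum.inr OrdSym.min) ![a] ↔ ∀ b, a ≤ b) ∧
    (∀ a : A.Dom, A.rel (Sum.inr OrdSym.max) ![a] ↔ ∀ b, b ≤ a)

end SOKrom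

namespace SOKrom

variable {σ : Vocab}

/-! ### Extended Krom logic (SO-EKROM) -/

/-- Literals allowed in the first-order part of an extended Krom clause:
atomic or negated atomic formulas whose relation symbol is in
`τ ∪ {X₁,…,Xₖ}` (including equality). -/
inductive ELit (σ : Vocab) (m : ℕ) (ar : Fin m → ℕ) : Type
  | pos (r : σ.Rel) (args : Fin (σ.arity r) → ℕ)
  | neg (r : σ.Rel) (args : Fin (σ.arity r) → ℕ)
  | vpos (i : Fin m) (args : Fin (ar i) → ℕ)
  | vneg (i : Fin m) (args : Fin (ar i) → ℕ)
  | eq (a b : ℕ)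
  | ne (a b : ℕ)

def ELit.Sat (A : Struct σ) {m : ℕ} {ar : Fin m → ℕ} (V : Val m ar A.Dom)
    (s : ℕ → A.Dom) : ELit σ m ar → Prop
  | .pos r args => A.rel r (fun i => s (args i))
  | .neg r args => ¬ A.rel r (fun i => s (args i))
  | .vpos i args => (fun j => s (args j)) ∈ V i
  | .vneg i args => (fun j => s (args j)) ∉ V i
  | .eq a b => s a = s b
  | .ne a b => s a ≠ s b

/-- A positive or negated atomic formula `Yᵢ z̄` / `¬ Yᵢ z̄` with a
second-order relation variable. -/
structure HLit (m : ℕ) (ar : Fin m → ℕ) where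
  sign : Bool
  i : Fin m
  args : Fin (ar i) → ℕ

def HLit.Sat {m : ℕ} {ar : Fin m → ℕ} {D : Type} (V : Val m ar D)
    (s : ℕ → D) (H : HLit m ar) : Prop :=
  if H.sign then (fun j => s (H.args j)) ∈ V H.i
  else (fun j => s (H.args j)) ∉ V H.i

/-- An extended Krom clause `α₁ ∨ ⋯ ∨ α_l ∨ H₁ ∨ H₂`. -/
structure EClause (σ : Vocab) (m : ℕ) (ar : Fin m → ℕ) where
  fo : List (ELit σ m ar)
  h1 : HLit m ar
  h2 : HLit m ar

def EClause.Sat (A : Struct σ) {m : ℕ} {ar : Fin m → ℕ} (V : Val m ar A.Dom)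
    (s : ℕ → A.Dom) (C : EClause σ m ar) : Prop :=
  (∃ l ∈ C.fo, l.Sat A V s) ∨ C.h1.Sat V s ∨ C.h2.Sat V s

/-- An SO-EKROM formula `∀X₁∃Y₁⋯∀Xₖ∃Yₖ ∀x̄(C₁ ∧ ⋯ ∧ Cₙ)`: the second-order
prefix mixes universally quantified relation variables (the `X`'s, `qt i =
false`) and existentially quantified ones (the `Y`'s, `qt i = true`); the
well-formedness condition `wf` requires that in every clause the literals of
the first-order part only use `τ` and the `X`'s, while the two distinguished
literals `H₁, H₂` use `Y`'s. -/
structure EKrom (σ : Vocab) where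
  m : ℕ
  ar : Fin m → ℕ
  qt : Fin m → Bool
  nvars : ℕ
  clauses : List (EClause σ m ar)
  wf : ∀ C ∈ clauses,
    (∀ (i : Fin m) (args : Fin (ar i) → ℕ),
        (ELit.vpos i args ∈ C.fo ∨ ELit.vneg i args ∈ C.fo) → qt i = false) ∧
    qt C.h1.i = true ∧ qt C.h2.i = true

def EKrom.Matrix (Φ : EKrom σ) (A : Struct σ) (V : Val Φ.m Φ.ar A.Dom)
    (e : ℕ → A.Dom) : Prop :=
  ∀ s : ℕ → A.Dom, (∀ j, Φ.nvars ≤ j → s j = e j) → ∀ C ∈ Φ.clauses, C.Sat A V s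

def EKrom.satAux (Φ : EKrom σ) (A : Struct σ) (e : ℕ → A.Dom)
    (V : Val Φ.m Φ.ar A.Dom) (j : ℕ) : Prop :=
  if h : j < Φ.m then
    if Φ.qt ⟨j, h⟩ then
      ∃ S, Φ.satAux A e (Function.update V ⟨j, h⟩ S) (j + 1)
    else
      ∀ S, Φ.satAux A e (Function.update V ⟨j, h⟩ S) (j + 1)
  else Φ.Matrix A V e
termination_by Φ.m - j

def EKrom.Sat (Φ : EKrom σ) (A : Struct σ) (e : ℕ → A.Dom) : Prop :=
  Φ.satAux A e (fun _ => ∅) 0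

/-- `Φ` is a `Π¹₂`-EKROM formula: all universal second-order quantifiers
precede all existential ones, i.e. the prefix has the form `∀X̄∃Ȳ`. -/
def EKrom.IsPi2 (Φ : EKrom σ) : Prop :=
  ∀ i j : Fin Φ.m, i ≤ j → Φ.qt i = true → Φ.qt j = true

/-- The substructure of `A` induced by a subset `D` of its domain. -/
def Substruct (A : Struct σ) (D : Set A.Dom) : Struct σ where
  Dom := D
  rel := fun r v => A.rel r (fun i => (v i : A.Dom))

end SOKrom

namespace SOKrom

variable {σ : Vocab}

/-! ### Quantified Boolean formulas in DNF and their encoding as structures -/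

/-- A closed quantified Boolean formula with `k` quantifier blocks and matrix
in disjunctive normal form: `nv` propositional variables, `blk x` being the
block in which variable `x` is quantified, and the matrix a disjunction of
clauses, each clause a conjunction of literals `(sign, variable)` (with
`sign = true` for a positive literal). -/
structure QDNF (k : ℕ) where
  nv : ℕ
  blk : Fin nv → Fin k
  clauses : List (List (Bool × Fin nv))

def QDNF.evalMatrix {k : ℕ} (ψ : QDNF k) (v : Fin ψ.nv → Bool) : Prop :=
  ∃ C ∈ ψ.clauses, ∀ l ∈ C, v l.2 = l.1

/-- Truth of the quantified Boolean formula, quantifying the blocks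
`h, h+1, …, k-1` in order; `sigma = true` means the prefix starts (at block 0)
with `∃`, and quantifiers alternate between consecutive blocks. -/
def QDNF.satBlk {k : ℕ} (ψ : QDNF k) (sigma : Bool) (v : Fin ψ.nv → Bool)
    (h : ℕ) : Prop :=
  if hh : h < k then
    if (if h % 2 = 0 then sigma else !sigma) then
      ∃ u : Fin ψ.nv → Bool,
        ψ.satBlk sigma (fun x => if ψ.blk x = ⟨h, hh⟩ then u x else v x) (h + 1)
    else
      ∀ u : Fin ψ.nv → Bool,
        ψ.satBlk sigma (fun x => if ψ.blk x = ⟨h, hh⟩ then u x else v x) (h + 1)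
  else ψ.evalMatrix v
termination_by k - h

/-- Truth of the closed QBF `ψ`, as a `Σₖ` sentence (`sigma = true`) or a `Πₖ`
sentence (`sigma = false`). -/
def QDNF.IsTrue {k : ℕ} (ψ : QDNF k) (sigma : Bool) : Prop :=
  ψ.satBlk sigma (fun _ => false) 0

/-- The vocabulary `{Clause, Var₁, …, Varₖ, Pos, Neg}`: `Sum.inl 0` is the
unary symbol `Clause`, `Sum.inl ⟨h+1,_⟩` is the unary symbol `Var_{h+1}`,
`Sum.inr true` is the binary symbol `Pos` and `Sum.inr false` is `Neg`. -/
def qbfVocab (k : ℕ) : Vocab where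
  Rel := Fin (k + 1) ⊕ Bool
  arity := Sum.elim (fun _ => 1) (fun _ => 2)

/-- The encoding of a QBF in DNF as a finite structure over
`{Clause, Var₁, …, Varₖ, Pos, Neg}`. -/
def QDNF.encode {k : ℕ} (ψ : QDNF k) : Struct (qbfVocab k) where
  Dom := Fin ψ.clauses.length ⊕ Fin ψ.nv
  rel := fun r =>
    match r with
    | Sum.inl c => fun v : Fin 1 → (Fin ψ.clauses.length ⊕ Fin ψ.nv) =>
        if c.val = 0 then ∃ i, v 0 = Sum.inl i
        else ∃ x, v 0 = Sum.inr x ∧ (ψ.blk x).val + 1 = c.val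
    | Sum.inr b => fun v : Fin 2 → (Fin ψ.clauses.length ⊕ Fin ψ.nv) =>
        ∃ (i : Fin ψ.clauses.length) (x : Fin ψ.nv),
          v 0 = Sum.inl i ∧ v 1 = Sum.inr x ∧ (b, x) ∈ ψ.clauses.get i

/-! ### The target normal form `∃Y ∀x̄(∃ȳ Y z̄ȳ ∧ C₁ ∧ ⋯ ∧ Cₘ)` -/

/-- A formula of the form `∃Y ∀x̄(∃ȳ Y z̄ȳ ∧ C₁ ∧ ⋯ ∧ Cₘ)`, where `Y` is a
single second-order variable of arity `a`, the variables `x̄` are those of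
index `< nvars`, `z̄` is a tuple of `p` variables from `x̄`, `ȳ` consists of
the remaining `a - p` argument positions of `Y`, and each `Cᵢ` is a
disjunction of atomic or negated atomic formulas over `σ ∪ {Y}`. -/
structure SkolemForm (σ : Vocab) where
  nvars : ℕ
  a : ℕ
  p : ℕ
  hp : p ≤ a
  zs : Fin p → ℕ
  hz : ∀ i, zs i < nvars
  clauses : List (List (ELit σ 1 (fun _ => a)))

def SkolemForm.Sat (F : SkolemForm σ) (A : Struct σ) (e : ℕ → A.Dom) : Prop :=
  ∃ Y : Set (Fin F.a → A.Dom),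
    ∀ s : ℕ → A.Dom, (∀ j, F.nvars ≤ j → s j = e j) →
      (∃ w : Fin F.a → A.Dom,
          w ∈ Y ∧ ∀ (i : Fin F.a) (h : i.val < F.p), w i = s (F.zs ⟨i.val, h⟩)) ∧
      ∀ C ∈ F.clauses, ∃ l ∈ C, ELit.Sat A (fun _ => Y) s l

end SOKrom

namespace SOKrom
variable {σ : Vocab}

lemma satAux_unfold (Φ : KromR σ) (A : Struct σ) (e : ℕ → A.Dom)
    (V : Val Φ.m Φ.ar A.Dom) (j : ℕ) :
    Φ.satAux A e V j = if h : j < Φ.m then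
      if Φ.qt ⟨j, h⟩ then
        ∃ S, Φ.satAux A e (Function.update V ⟨j, h⟩ S) (j + 1)
      else
        ∀ S, Φ.satAux A e (Function.update V ⟨j, h⟩ S) (j + 1)
    else Φ.Matrix A V e := by
  rw [KromR.satAux]

lemma altCount_cons_cons (a b : Bool) (l : List Bool) :
    altCount (a :: b :: l) = (if a = b then 0 else 1) + altCount (b :: l) := rfl

/-- altCount of a list with an element appended. -/
lemma altCount_concat : ∀ (l : List Bool) (a b : Bool),
    altCount ((a :: l) ++ [b]) =
      altCount (a :: l) + (if (a :: l).getLast? = some b then 0 else 1) := by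
  intro l
  induction l with
  | nil => intro a b; by_cases h : a = b <;> simp [altCount, h]
  | cons c l ih =>
      intro a b
      have h1 := ih c b
      simp only [List.cons_append] at h1 ⊢
      rw [altCount_cons_cons a c, altCount_cons_cons a c, h1,
        List.getLast?_cons_cons]
      omega

lemma getLast?_eq_altCount : ∀ (l : List Bool) (a : Bool),
    (a :: l).getLast? = some (if Even (altCount (a :: l)) then a else !a) := by
  intro l
  induction l with
  | nil => intro a; simp [altCount]
  | cons b l ih =>
      intro a
      rw [List.getLast?_cons_cons, ih b]
      congr 1
      rw [altCount_cons_cons]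
      by_cases hab : a = b
      · subst hab; simp
      · have hb : b = !a := by cases a <;> cases b <;> simp_all
        subst hb
        simp only [if_neg hab]
        rcases Nat.even_or_odd (altCount ((!a) :: l)) with h | h
        · have h2 : ¬ Even (1 + altCount ((!a) :: l)) := by
            rw [Nat.add_comm, Nat.even_add_one]; simpa using h
          simp [h, h2]
        · have h2 : Even (1 + altCount ((!a) :: l)) := by
            rw [Nat.add_comm, Nat.even_add_one]; exact Nat.not_even_iff_odd.mpr h
          simp [h2, Nat.not_even_iff_odd.mpr h]
/-! ### Eliminating the innermost universal second-order quantifier -/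

section Elim

variable {m0 : ℕ} {ar : Fin (m0 + 1) → ℕ}

/-- Restriction of the arity function to the first `m0` variables. -/
abbrev arRes (ar : Fin (m0 + 1) → ℕ) : Fin m0 → ℕ := fun i => ar i.castSucc

/-- Literal kinds mentioning the last (innermost) second-order variable. -/
inductive InnerLit (n : ℕ) : Type
  | pos (a : Fin n → ℕ)
  | neg (a : Fin n → ℕ)
  | ex

def InnerLit.ISat {n : ℕ} {D : Type} (S : Set (Fin n → D)) (s : ℕ → D) :
    InnerLit n → Prop
  | .pos a => (fun j => s (a j)) ∈ S
  | .neg a => (fun j => s (a j)) ∉ S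
  | .ex => ∃ t, t ∈ S

/-- Classify a second-order literal as outer (not mentioning the last
variable) or inner. -/
def elimSOLit : SOLit (m0 + 1) ar →
    SOLit m0 (arRes ar) ⊕ InnerLit (ar (Fin.last m0))
  | .pos i args =>
      Fin.lastCases (motive := fun i => (Fin (ar i) → ℕ) →
          SOLit m0 (arRes ar) ⊕ InnerLit (ar (Fin.last m0)))
        (fun a => .inr (.pos a)) (fun j a => .inl (.pos j a)) i args
  | .neg i args =>
      Fin.lastCases (motive := fun i => (Fin (ar i) → ℕ) →
          SOLit m0 (arRes ar) ⊕ InnerLit (ar (Fin.last m0)))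
        (fun a => .inr (.neg a)) (fun j a => .inl (.neg j a)) i args
  | .ex i =>
      Fin.lastCases (motive := fun _ =>
          SOLit m0 (arRes ar) ⊕ InnerLit (ar (Fin.last m0)))
        (.inr .ex) (fun j => .inl (.ex j)) i
  | .bot => .inl .bot

variable {σ : Vocab}

/-- Transform a clause when eliminating the innermost universal variable. -/
def elimClause (C : Clause σ (m0 + 1) ar) : List (Clause σ m0 (arRes ar)) :=
  match elimSOLit C.h1, elimSOLit C.h2 with
  | .inl l1, .inl l2 => [⟨C.fo, l1, l2⟩]
  | .inl l1, .inr _ => [⟨C.fo, l1, .bot⟩]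
  | .inr _, .inl l2 => [⟨C.fo, .bot, l2⟩]
  | .inr k1, .inr k2 =>
    match k1, k2 with
    | .pos a, .neg b =>
        (List.finRange (ar (Fin.last m0))).map
          (fun j => ⟨.eq (a j) (b j) :: C.fo, .bot, .bot⟩)
    | .neg b, .pos a =>
        (List.finRange (ar (Fin.last m0))).map
          (fun j => ⟨.eq (a j) (b j) :: C.fo, .bot, .bot⟩)
    | .ex, .neg _ => []
    | .neg _, .ex => []
    | _, _ => [⟨C.fo, .bot, .bot⟩]

/-- The result of eliminating the innermost universal variable. -/
def elimData (qt : Fin (m0 + 1) → Bool) (nv : ℕ)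
    (cls : List (Clause σ (m0 + 1) ar)) : KromR σ :=
  ⟨m0, arRes ar, fun i => qt i.castSucc, nv, cls.flatMap elimClause⟩

/-- Satisfaction of classified literals. -/
def ESat (A : Struct σ) (V' : Val m0 (arRes ar) A.Dom)
    (S : Set (Fin (ar (Fin.last m0)) → A.Dom)) (s : ℕ → A.Dom) :
    SOLit m0 (arRes ar) ⊕ InnerLit (ar (Fin.last m0)) → Prop
  | .inl l' => SOLit.Sat A V' s l'
  | .inr k => k.ISat S s

lemma elim_lit_sat (A : Struct σ) (W : Val (m0 + 1) ar A.Dom)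
    (V' : Val m0 (arRes ar) A.Dom)
    (hc : ∀ i : Fin m0, W i.castSucc = V' i)
    (S : Set (Fin (ar (Fin.last m0)) → A.Dom))
    (hl : W (Fin.last m0) = S) (s : ℕ → A.Dom) (l : SOLit (m0 + 1) ar) :
    SOLit.Sat A W s l ↔ ESat A V' S s (elimSOLit l) := by
  cases l with
  | pos i args =>
      induction i using Fin.lastCases with
      | last =>
          simp only [elimSOLit, Fin.lastCases_last]
          rw [show SOLit.Sat A W s (.pos (Fin.last m0) args) =
            ((fun j => s (args j)) ∈ W (Fin.last m0)) from rfl, hl]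
          exact Iff.rfl
      | cast j =>
          simp only [elimSOLit, Fin.lastCases_castSucc]
          rw [show SOLit.Sat A W s (.pos j.castSucc args) =
            ((fun j' => s (args j')) ∈ W j.castSucc) from rfl, hc j]
          exact Iff.rfl
  | neg i args =>
      induction i using Fin.lastCases with
      | last =>
          simp only [elimSOLit, Fin.lastCases_last]
          rw [show SOLit.Sat A W s (.neg (Fin.last m0) args) =
            ((fun j => s (args j)) ∉ W (Fin.last m0)) from rfl, hl]
          exact Iff.rfl
      | cast j =>
          simp only [elimSOLit, Fin.lastCases_castSucc]
          rw [show SOLit.Sat A W s (.neg j.castSucc args) =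
            ((fun j' => s (args j')) ∉ W j.castSucc) from rfl, hc j]
          exact Iff.rfl
  | ex i =>
      induction i using Fin.lastCases with
      | last =>
          simp only [elimSOLit, Fin.lastCases_last]
          rw [show SOLit.Sat A W s (.ex (Fin.last m0)) =
            (∃ t, t ∈ W (Fin.last m0)) from rfl, hl]
          exact Iff.rfl
      | cast j =>
          simp only [elimSOLit, Fin.lastCases_castSucc]
          rw [show SOLit.Sat A W s (.ex j.castSucc) =
            (∃ t, t ∈ W j.castSucc) from rfl, hc j]
          exact Iff.rfl
  | bot => exact Iff.rfl

end Elim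
section Elim2

variable {m0 : ℕ} {ar : Fin (m0 + 1) → ℕ} {σ : Vocab}

/-- A value of the inner variable falsifying a given inner literal. -/
def killS {n : ℕ} {D : Type} : InnerLit n → Set (Fin n → D)
  | .pos _ => ∅
  | .ex => ∅
  | .neg _ => Set.univ

lemma killS_not {n : ℕ} {D : Type} (s : ℕ → D) (k : InnerLit n) :
    ¬ k.ISat (killS k) s := by
  cases k <;> simp [InnerLit.ISat, killS]

lemma elim_clause_sat (A : Struct σ) (V : Val (m0 + 1) ar A.Dom)
    (V' : Val m0 (arRes ar) A.Dom)
    (hc : ∀ i : Fin m0, V i.castSucc = V' i) (s : ℕ → A.Dom)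
    (C : Clause σ (m0 + 1) ar) :
    (∀ S, Clause.Sat A (Function.update V (Fin.last m0) S) s C) ↔
      (∀ C' ∈ elimClause C, Clause.Sat A V' s C') := by
  have hup : ∀ (S : Set (Fin (ar (Fin.last m0)) → A.Dom)) (l : SOLit (m0+1) ar),
      SOLit.Sat A (Function.update V (Fin.last m0) S) s l ↔
        ESat A V' S s (elimSOLit l) := by
    intro S l
    refine elim_lit_sat A _ V' ?_ S (Function.update_self _ _ _) s l
    intro i
    rw [Function.update_of_ne (Fin.castSucc_lt_last i).ne]
    exact hc i
  have key : ∀ S, Clause.Sat A (Function.update V (Fin.last m0) S) s C ↔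
      ((∃ l ∈ C.fo, l.Sat A s) ∨ ESat A V' S s (elimSOLit C.h1) ∨
        ESat A V' S s (elimSOLit C.h2)) := by
    intro S
    unfold Clause.Sat
    rw [hup S C.h1, hup S C.h2]
  simp only [key]
  set F := ∃ l ∈ C.fo, l.Sat A s with hF
  rcases h1 : elimSOLit C.h1 with l1 | k1 <;> rcases h2 : elimSOLit C.h2 with l2 | k2
  · -- outer / outer
    simp only [elimClause, h1, h2, List.mem_singleton, forall_eq, Clause.Sat, ESat]
    exact ⟨fun h => h ∅, fun h _ => h⟩
  · -- outer / inner
    simp only [elimClause, h1, h2, List.mem_singleton, forall_eq, Clause.Sat, ESat]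
    constructor
    · intro h
      rcases h (killS k2) with hF' | hl1 | hk
      · exact Or.inl hF'
      · exact Or.inr (Or.inl hl1)
      · exact absurd hk (killS_not s k2)
    · rintro (hF' | hl1 | hk) S
      · exact Or.inl hF'
      · exact Or.inr (Or.inl hl1)
      · exact absurd hk (by simp [SOLit.Sat])
  · -- inner / outer
    simp only [elimClause, h1, h2, List.mem_singleton, forall_eq, Clause.Sat, ESat]
    constructor
    · intro h
      rcases h (killS k1) with hF' | hk | hl2
      · exact Or.inl hF'
      · exact absurd hk (killS_not s k1)
      · exact Or.inr (Or.inr hl2)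
    · rintro (hF' | hk | hl2) S
      · exact Or.inl hF'
      · exact absurd hk (by simp [SOLit.Sat])
      · exact Or.inr (Or.inr hl2)
  · -- inner / inner
    cases k1 with
    | pos a =>
        cases k2 with
        | neg b =>
            simp only [elimClause, h1, h2]
            have step1 : (∀ S, F ∨ ESat A V' S s (Sum.inr (.pos a)) ∨
                ESat A V' S s (Sum.inr (.neg b))) ↔
                (F ∨ ∀ j, s (a j) = s (b j)) := by
              constructor
              · intro h
                by_cases hF' : F
                · exact Or.inl hF'
                · refine Or.inr fun j => ?_
                  rcases h {t | t = fun j' => s (b j')} with h' | h' | h'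
                  · exact absurd h' hF'
                  · exact congrFun h' j
                  · exact absurd rfl h'
              · rintro (hF' | heq) S
                · exact Or.inl hF'
                · by_cases hb : (fun j => s (b j)) ∈ S
                  · refine Or.inr (Or.inl ?_)
                    have : (fun j => s (a j)) = fun j => s (b j) := funext heq
                    rw [show ESat A V' S s (Sum.inr (InnerLit.pos a)) =
                      ((fun j => s (a j)) ∈ S) from rfl, this]
                    exact hb
                  · exact Or.inr (Or.inr hb)
            rw [step1]
            have step2 : (∀ C' ∈ (List.finRange (ar (Fin.last m0))).map
                (fun j => (⟨.eq (a j) (b j) :: C.fo, .bot, .bot⟩ :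
                  Clause σ m0 (arRes ar))),
                Clause.Sat A V' s C') ↔ ∀ j, (s (a j) = s (b j) ∨ F) := by
              constructor
              · intro h j
                have hj := h _ (List.mem_map.mpr ⟨j, List.mem_finRange j, rfl⟩)
                rcases hj with hfo | hb | hb
                · rcases hfo with ⟨l, hl, hsat⟩
                  rcases List.mem_cons.mp hl with rfl | hl
                  · exact Or.inl hsat
                  · exact Or.inr ⟨l, hl, hsat⟩
                · exact hb.elim
                · exact hb.elim
              · intro h C' hC'
                rcases List.mem_map.mp hC' with ⟨j, -, rfl⟩
                rcases h j with he | hfo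
                · exact Or.inl ⟨.eq (a j) (b j), List.mem_cons_self, he⟩
                · rcases hfo with ⟨l, hl, hsat⟩
                  exact Or.inl ⟨l, List.mem_cons_of_mem _ hl, hsat⟩
            rw [step2]
            constructor
            · rintro (hF' | he) j
              · exact Or.inr hF'
              · exact Or.inl (he j)
            · intro h
              by_cases hF' : F
              · exact Or.inl hF'
              · exact Or.inr fun j => (h j).resolve_right hF'
        | pos b =>
            simp only [elimClause, h1, h2, List.mem_singleton, forall_eq, Clause.Sat,
              SOLit.Sat, ESat]
            constructor
            · intro h
              rcases h ∅ with h' | h' | h'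
              · exact Or.inl h'
              · exact absurd h' (by simp [InnerLit.ISat])
              · exact absurd h' (by simp [InnerLit.ISat])
            · rintro (h' | h' | h') S
              · exact Or.inl h'
              · exact absurd h' not_false
              · exact absurd h' not_false
        | ex =>
            simp only [elimClause, h1, h2, List.mem_singleton, forall_eq, Clause.Sat,
              SOLit.Sat, ESat]
            constructor
            · intro h
              rcases h ∅ with h' | h' | h'
              · exact Or.inl h'
              · exact absurd h' (by simp [InnerLit.ISat])
              · exact absurd h' (by simp [InnerLit.ISat])
            · rintro (h' | h' | h') S
              · exact Or.inl h'
              · exact absurd h' not_false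
              · exact absurd h' not_false
    | neg b =>
        cases k2 with
        | pos a =>
            simp only [elimClause, h1, h2]
            have step1 : (∀ S, F ∨ ESat A V' S s (Sum.inr (.neg b)) ∨
                ESat A V' S s (Sum.inr (.pos a))) ↔
                (F ∨ ∀ j, s (a j) = s (b j)) := by
              constructor
              · intro h
                by_cases hF' : F
                · exact Or.inl hF'
                · refine Or.inr fun j => ?_
                  rcases h {t | t = fun j' => s (b j')} with h' | h' | h'
                  · exact absurd h' hF'
                  · exact absurd rfl h'
                  · exact congrFun h' j
              · rintro (hF' | heq) S
                · exact Or.inl hF'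
                · by_cases hb : (fun j => s (b j)) ∈ S
                  · refine Or.inr (Or.inr ?_)
                    have : (fun j => s (a j)) = fun j => s (b j) := funext heq
                    rw [show ESat A V' S s (Sum.inr (InnerLit.pos a)) =
                      ((fun j => s (a j)) ∈ S) from rfl, this]
                    exact hb
                  · exact Or.inr (Or.inl hb)
            rw [step1]
            have step2 : (∀ C' ∈ (List.finRange (ar (Fin.last m0))).map
                (fun j => (⟨.eq (a j) (b j) :: C.fo, .bot, .bot⟩ :
                  Clause σ m0 (arRes ar))),
                Clause.Sat A V' s C') ↔ ∀ j, (s (a j) = s (b j) ∨ F) := by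
              constructor
              · intro h j
                have hj := h _ (List.mem_map.mpr ⟨j, List.mem_finRange j, rfl⟩)
                rcases hj with hfo | hb | hb
                · rcases hfo with ⟨l, hl, hsat⟩
                  rcases List.mem_cons.mp hl with rfl | hl
                  · exact Or.inl hsat
                  · exact Or.inr ⟨l, hl, hsat⟩
                · exact hb.elim
                · exact hb.elim
              · intro h C' hC'
                rcases List.mem_map.mp hC' with ⟨j, -, rfl⟩
                rcases h j with he | hfo
                · exact Or.inl ⟨.eq (a j) (b j), List.mem_cons_self, he⟩
                · rcases hfo with ⟨l, hl, hsat⟩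
                  exact Or.inl ⟨l, List.mem_cons_of_mem _ hl, hsat⟩
            rw [step2]
            constructor
            · rintro (hF' | he) j
              · exact Or.inr hF'
              · exact Or.inl (he j)
            · intro h
              by_cases hF' : F
              · exact Or.inl hF'
              · exact Or.inr fun j => (h j).resolve_right hF'
        | neg b' =>
            simp only [elimClause, h1, h2, List.mem_singleton, forall_eq, Clause.Sat,
              SOLit.Sat, ESat]
            constructor
            · intro h
              rcases h Set.univ with h' | h' | h'
              · exact Or.inl h'
              · exact absurd h' (by simp [InnerLit.ISat])
              · exact absurd h' (by simp [InnerLit.ISat])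
            · rintro (h' | h' | h') S
              · exact Or.inl h'
              · exact absurd h' not_false
              · exact absurd h' not_false
        | ex =>
            simp only [elimClause, h1, h2, List.not_mem_nil, false_implies]
            refine ⟨fun _ _ => trivial, fun _ S => ?_⟩
            by_cases hb : (fun j => s (b j)) ∈ S
            · exact Or.inr (Or.inr ⟨_, hb⟩)
            · exact Or.inr (Or.inl hb)
    | ex =>
        cases k2 with
        | neg b =>
            simp only [elimClause, h1, h2, List.not_mem_nil, false_implies]
            refine ⟨fun _ _ => trivial, fun _ S => ?_⟩
            by_cases hb : (fun j => s (b j)) ∈ S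
            · exact Or.inr (Or.inl ⟨_, hb⟩)
            · exact Or.inr (Or.inr hb)
        | pos a =>
            simp only [elimClause, h1, h2, List.mem_singleton, forall_eq, Clause.Sat,
              SOLit.Sat, ESat]
            constructor
            · intro h
              rcases h ∅ with h' | h' | h'
              · exact Or.inl h'
              · exact absurd h' (by simp [InnerLit.ISat])
              · exact absurd h' (by simp [InnerLit.ISat])
            · rintro (h' | h' | h') S
              · exact Or.inl h'
              · exact absurd h' not_false
              · exact absurd h' not_false
        | ex =>
            simp only [elimClause, h1, h2, List.mem_singleton, forall_eq, Clause.Sat,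
              SOLit.Sat, ESat]
            constructor
            · intro h
              rcases h ∅ with h' | h' | h'
              · exact Or.inl h'
              · exact absurd h' (by simp [InnerLit.ISat])
              · exact absurd h' (by simp [InnerLit.ISat])
            · rintro (h' | h' | h') S
              · exact Or.inl h'
              · exact absurd h' not_false
              · exact absurd h' not_false

end Elim2
section Elim3

variable {m0 : ℕ} {ar : Fin (m0 + 1) → ℕ} {σ : Vocab}

lemma elim_matrix (qt : Fin (m0 + 1) → Bool) (nv : ℕ)
    (cls : List (Clause σ (m0 + 1) ar)) (A : Struct σ) (e : ℕ → A.Dom)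
    (V : Val (m0 + 1) ar A.Dom) (V' : Val m0 (arRes ar) A.Dom)
    (hc : ∀ i : Fin m0, V i.castSucc = V' i) :
    (∀ S, KromR.Matrix ⟨m0 + 1, ar, qt, nv, cls⟩ A
        (Function.update V (Fin.last m0) S) e) ↔
      KromR.Matrix (elimData qt nv cls) A V' e := by
  simp only [KromR.Matrix, elimData]
  constructor
  · intro h s hs C' hC'
    rcases List.mem_flatMap.mp hC' with ⟨C, hC, hC'⟩
    exact (elim_clause_sat A V V' hc s C).mp (fun S => h S s hs C hC) C' hC'
  · intro h S s hs C hC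
    exact (elim_clause_sat A V V' hc s C).mpr
      (fun C' hC' => h s hs C' (List.mem_flatMap.mpr ⟨C, hC, hC'⟩)) S

lemma elim_satAux (qt : Fin (m0 + 1) → Bool) (nv : ℕ)
    (cls : List (Clause σ (m0 + 1) ar)) (hq : qt (Fin.last m0) = false)
    (A : Struct σ) (e : ℕ → A.Dom) (j : ℕ) (hj : j ≤ m0)
    (V : Val (m0 + 1) ar A.Dom) (V' : Val m0 (arRes ar) A.Dom)
    (hc : ∀ i : Fin m0, i.val < j → V i.castSucc = V' i) :
    KromR.satAux ⟨m0 + 1, ar, qt, nv, cls⟩ A e V j ↔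
      KromR.satAux (elimData qt nv cls) A e V' j := by
  have hjm : j < m0 + 1 := Nat.lt_succ_of_le hj
  rw [satAux_unfold, satAux_unfold (elimData qt nv cls) A e V' j]
  by_cases h : j < m0
  · rw [dif_pos (show j < (⟨m0 + 1, ar, qt, nv, cls⟩ : KromR σ).m from hjm),
      dif_pos (show j < (elimData (σ := σ) (ar := ar) qt nv cls).m from h)]
    have hrec : ∀ S : Set (Fin (ar (Fin.castSucc ⟨j, h⟩)) → A.Dom),
        KromR.satAux (⟨m0 + 1, ar, qt, nv, cls⟩ : KromR σ) A e
            (Function.update V ⟨j, hjm⟩ S) (j + 1) ↔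
          KromR.satAux (elimData (σ := σ) (ar := ar) qt nv cls) A e
            (Function.update V' ⟨j, h⟩ S) (j + 1) := by
      intro S
      apply elim_satAux qt nv cls hq A e (j + 1) (by omega)
      intro i hi
      by_cases hij : i = ⟨j, h⟩
      · rw [hij]
        have e1 : Function.update V ⟨j, hjm⟩ S ((⟨j, h⟩ : Fin m0).castSucc) = S :=
          Function.update_self _ _ _
        rw [e1]
        exact (Function.update_self (⟨j, h⟩ : Fin m0) S V').symm
      · have h1 : i.castSucc ≠ (⟨j, hjm⟩ : Fin (m0 + 1)) := fun hh =>
          hij (Fin.ext (by simpa using congrArg Fin.val hh))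
        rw [Function.update_of_ne h1]
        refine (hc i ?_).trans (Function.update_of_ne hij _ _).symm
        rcases Nat.lt_succ_iff_lt_or_eq.mp hi with h' | h'
        · exact h'
        · exact absurd (Fin.ext h') hij
    by_cases hb : (⟨m0 + 1, ar, qt, nv, cls⟩ : KromR σ).qt ⟨j, hjm⟩ = true
    · have hb2 : (elimData (σ := σ) (ar := ar) qt nv cls).qt ⟨j, h⟩ = true := hb
      rw [if_pos hb, if_pos hb2]
      exact exists_congr hrec
    · have hb2 : ¬ (elimData (σ := σ) (ar := ar) qt nv cls).qt ⟨j, h⟩ = true := hb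
      rw [if_neg hb, if_neg hb2]
      exact forall_congr' hrec
  · obtain rfl : j = m0 := by omega
    rw [dif_pos (show j < (⟨j + 1, ar, qt, nv, cls⟩ : KromR σ).m from hjm),
      dif_neg (show ¬ j < (elimData (σ := σ) (ar := ar) qt nv cls).m from
        lt_irrefl j)]
    have hq' : qt ⟨j, hjm⟩ = false := hq
    rw [if_neg (show ¬ ((⟨j + 1, ar, qt, nv, cls⟩ : KromR σ).qt ⟨j, hjm⟩ = true)
      from by simp [hq'])]
    have hstep : ∀ S : Set (Fin (ar (Fin.last j)) → A.Dom),
        KromR.satAux (⟨j + 1, ar, qt, nv, cls⟩ : KromR σ) A e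
          (Function.update V ⟨j, hjm⟩ S) (j + 1) ↔
        KromR.Matrix (⟨j + 1, ar, qt, nv, cls⟩ : KromR σ) A
          (Function.update V (Fin.last j) S) e := by
      intro S
      rw [satAux_unfold, dif_neg (show ¬ j + 1 <
        (⟨j + 1, ar, qt, nv, cls⟩ : KromR σ).m from lt_irrefl _)]
      exact Iff.rfl
    exact (forall_congr' hstep).trans
      (elim_matrix qt nv cls A e V V' (fun i => hc i i.isLt))
termination_by m0 - j

lemma elim_sat (qt : Fin (m0 + 1) → Bool) (nv : ℕ)
    (cls : List (Clause σ (m0 + 1) ar)) (hq : qt (Fin.last m0) = false)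
    (A : Struct σ) (e : ℕ → A.Dom) :
    KromR.Sat ⟨m0 + 1, ar, qt, nv, cls⟩ A e ↔
      (elimData qt nv cls).Sat A e := by
  unfold KromR.Sat
  exact elim_satAux qt nv cls hq A e 0 (Nat.zero_le _) _ _ (by omega)

lemma elim_prefixList (qt : Fin (m0 + 1) → Bool) (nv : ℕ)
    (cls : List (Clause σ (m0 + 1) ar)) :
    (⟨m0 + 1, ar, qt, nv, cls⟩ : KromR σ).prefixList =
      (elimData qt nv cls).prefixList ++ [qt (Fin.last m0)] := by
  show List.ofFn qt = List.ofFn (fun i => qt i.castSucc) ++ [qt (Fin.last m0)]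
  rw [List.ofFn_succ' qt, List.concat_eq_append]

end Elim3
/-! ### Appending a dummy innermost universal second-order quantifier -/

section Ext

variable {m : ℕ} {σ : Vocab}

/-- Extend the arity function by a dummy nullary variable at the end. -/
def arE (ar : Fin m → ℕ) : Fin (m + 1) → ℕ := Fin.lastCases 0 ar

lemma ecs (ar : Fin m → ℕ) (i : Fin m) : arE ar i.castSucc = ar i :=
  Fin.lastCases_castSucc i

def liftLitE {ar : Fin m → ℕ} : SOLit m ar → SOLit (m + 1) (arE ar)
  | .pos i a => .pos i.castSucc (fun j => a (Fin.cast (ecs ar i) j))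
  | .neg i a => .neg i.castSucc (fun j => a (Fin.cast (ecs ar i) j))
  | .ex i => .ex i.castSucc
  | .bot => .bot

def liftClauseE {ar : Fin m → ℕ} (C : Clause σ m ar) : Clause σ (m + 1) (arE ar) :=
  ⟨C.fo, liftLitE C.h1, liftLitE C.h2⟩

/-- Transport of a valuation set along the arity identification. -/
def cset {ar : Fin m → ℕ} {D : Type} (i : Fin m) (T : Set (Fin (ar i) → D)) :
    Set (Fin (arE ar i.castSucc) → D) :=
  {t | (fun j => t (Fin.cast (ecs ar i).symm j)) ∈ T}

variable {ar : Fin m → ℕ}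

lemma ext_lit_sat (A : Struct σ) (W : Val (m + 1) (arE ar) A.Dom)
    (V : Val m ar A.Dom) (hc : ∀ i : Fin m, W i.castSucc = cset i (V i))
    (s : ℕ → A.Dom) (l : SOLit m ar) :
    SOLit.Sat A W s (liftLitE l) ↔ SOLit.Sat A V s l := by
  cases l with
  | pos i a =>
      rw [show SOLit.Sat A W s (liftLitE (.pos i a)) =
        ((fun j => s (a (Fin.cast (ecs ar i) j))) ∈ W i.castSucc) from rfl, hc i]
      exact Iff.rfl
  | neg i a =>
      rw [show SOLit.Sat A W s (liftLitE (.neg i a)) =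
        ((fun j => s (a (Fin.cast (ecs ar i) j))) ∉ W i.castSucc) from rfl, hc i]
      exact Iff.rfl
  | ex i =>
      rw [show SOLit.Sat A W s (liftLitE (.ex i)) =
        (∃ t, t ∈ W i.castSucc) from rfl, hc i]
      constructor
      · rintro ⟨t, ht⟩
        exact ⟨_, ht⟩
      · rintro ⟨u, hu⟩
        exact ⟨fun j => u (Fin.cast (ecs ar i) j), hu⟩
  | bot => exact Iff.rfl

lemma ext_clause_sat (A : Struct σ) (W : Val (m + 1) (arE ar) A.Dom)
    (V : Val m ar A.Dom) (hc : ∀ i : Fin m, W i.castSucc = cset i (V i))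
    (s : ℕ → A.Dom) (C : Clause σ m ar) :
    Clause.Sat A W s (liftClauseE C) ↔ Clause.Sat A V s C := by
  unfold Clause.Sat
  rw [show (liftClauseE C).fo = C.fo from rfl,
    show (liftClauseE C).h1 = liftLitE C.h1 from rfl,
    show (liftClauseE C).h2 = liftLitE C.h2 from rfl,
    ext_lit_sat A W V hc s C.h1, ext_lit_sat A W V hc s C.h2]

lemma ext_matrix (qt : Fin m → Bool) (nv : ℕ) (cls : List (Clause σ m ar))
    (A : Struct σ) (e : ℕ → A.Dom) (W : Val (m + 1) (arE ar) A.Dom)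
    (V : Val m ar A.Dom) (hc : ∀ i : Fin m, W i.castSucc = cset i (V i)) :
    KromR.Matrix ⟨m + 1, arE ar, Fin.lastCases false qt, nv,
        cls.map liftClauseE⟩ A W e ↔
      KromR.Matrix ⟨m, ar, qt, nv, cls⟩ A V e := by
  simp only [KromR.Matrix]
  constructor
  · intro h s hs C hC
    exact (ext_clause_sat A W V hc s C).mp
      (h s hs (liftClauseE C) (List.mem_map_of_mem hC))
  · intro h s hs C' hC'
    rcases List.mem_map.mp hC' with ⟨C, hC, rfl⟩
    exact (ext_clause_sat A W V hc s C).mpr (h s hs C hC)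

lemma ext_satAux (qt : Fin m → Bool) (nv : ℕ) (cls : List (Clause σ m ar))
    (A : Struct σ) (e : ℕ → A.Dom) (j : ℕ) (hj : j ≤ m)
    (W : Val (m + 1) (arE ar) A.Dom) (V : Val m ar A.Dom)
    (hc : ∀ i : Fin m, i.val < j → W i.castSucc = cset i (V i)) :
    KromR.satAux ⟨m + 1, arE ar, Fin.lastCases false qt, nv,
        cls.map liftClauseE⟩ A e W j ↔
      KromR.satAux ⟨m, ar, qt, nv, cls⟩ A e V j := by
  have hjm : j < m + 1 := Nat.lt_succ_of_le hj
  rw [satAux_unfold, satAux_unfold]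
  by_cases h : j < m
  · rw [dif_pos (show j < (⟨m + 1, arE ar, Fin.lastCases false qt, nv,
        cls.map liftClauseE⟩ : KromR σ).m from hjm),
      dif_pos (show j < (⟨m, ar, qt, nv, cls⟩ : KromR σ).m from h)]
    have hbq : (⟨m + 1, arE ar, Fin.lastCases false qt, nv,
        cls.map liftClauseE⟩ : KromR σ).qt ⟨j, hjm⟩ = qt ⟨j, h⟩ :=
      @Fin.lastCases_castSucc m (fun _ => Bool) false qt ⟨j, h⟩
    rw [hbq]
    have hupd : ∀ (S : Set (Fin (arE ar (Fin.castSucc ⟨j, h⟩)) → A.Dom))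
        (S' : Set (Fin (ar ⟨j, h⟩) → A.Dom)), S = cset ⟨j, h⟩ S' →
        (KromR.satAux ⟨m + 1, arE ar, Fin.lastCases false qt, nv,
            cls.map liftClauseE⟩ A e (Function.update W ⟨j, hjm⟩ S) (j + 1) ↔
          KromR.satAux ⟨m, ar, qt, nv, cls⟩ A e
            (Function.update V ⟨j, h⟩ S') (j + 1)) := by
      intro S S' hSS
      apply ext_satAux qt nv cls A e (j + 1) (by omega)
      intro i hi
      by_cases hij : i = ⟨j, h⟩
      · rw [hij]
        have e1 : Function.update W ⟨j, hjm⟩ S ((⟨j, h⟩ : Fin m).castSucc) = S :=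
          Function.update_self _ _ _
        rw [e1, Function.update_self, hSS]
      · have h1 : i.castSucc ≠ (⟨j, hjm⟩ : Fin (m + 1)) := fun hh =>
          hij (Fin.ext (by simpa using congrArg Fin.val hh))
        rw [Function.update_of_ne h1, Function.update_of_ne hij]
        refine hc i ?_
        rcases Nat.lt_succ_iff_lt_or_eq.mp hi with h' | h'
        · exact h'
        · exact absurd (Fin.ext h') hij
    by_cases hb : qt ⟨j, h⟩ = true
    · rw [if_pos hb, if_pos hb]
      constructor
      · rintro ⟨S, hS⟩
        exact ⟨{u | (fun j' => u (Fin.cast (ecs ar ⟨j, h⟩) j')) ∈ S},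
          (hupd S {u | (fun j' => u (Fin.cast (ecs ar ⟨j, h⟩) j')) ∈ S} rfl).mp hS⟩
      · rintro ⟨S', hS'⟩
        exact ⟨cset ⟨j, h⟩ S', (hupd _ S' rfl).mpr hS'⟩
    · rw [if_neg hb, if_neg hb]
      constructor
      · intro hall S'
        exact (hupd _ S' rfl).mp (hall (cset ⟨j, h⟩ S'))
      · intro hall S
        exact (hupd S {u | (fun j' => u (Fin.cast (ecs ar ⟨j, h⟩) j')) ∈ S}
          rfl).mpr (hall {u | (fun j' => u (Fin.cast (ecs ar ⟨j, h⟩) j')) ∈ S})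
  · obtain rfl : j = m := by omega
    rw [dif_pos (show j < (⟨j + 1, arE ar, Fin.lastCases false qt, nv,
        cls.map liftClauseE⟩ : KromR σ).m from hjm),
      dif_neg (show ¬ j < (⟨j, ar, qt, nv, cls⟩ : KromR σ).m from lt_irrefl j)]
    have hbq : (⟨j + 1, arE ar, Fin.lastCases false qt, nv,
        cls.map liftClauseE⟩ : KromR σ).qt ⟨j, hjm⟩ = false :=
      @Fin.lastCases_last j (fun _ => Bool) false qt
    rw [if_neg (show ¬ ((⟨j + 1, arE ar, Fin.lastCases false qt, nv,
        cls.map liftClauseE⟩ : KromR σ).qt ⟨j, hjm⟩ = true) from by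
          rw [hbq]; simp)]
    have hstep : ∀ S : Set (Fin (arE ar (Fin.last j)) → A.Dom),
        KromR.satAux ⟨j + 1, arE ar, Fin.lastCases false qt, nv,
            cls.map liftClauseE⟩ A e (Function.update W ⟨j, hjm⟩ S) (j + 1) ↔
          KromR.Matrix ⟨j, ar, qt, nv, cls⟩ A V e := by
      intro S
      rw [satAux_unfold, dif_neg (show ¬ j + 1 < (⟨j + 1, arE ar,
        Fin.lastCases false qt, nv, cls.map liftClauseE⟩ : KromR σ).m from
        lt_irrefl _)]
      refine ext_matrix qt nv cls A e _ V ?_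
      intro i
      have h1 : i.castSucc ≠ (⟨j, hjm⟩ : Fin (j + 1)) := fun hh =>
        absurd (by simpa using congrArg Fin.val hh) (by omega)
      rw [Function.update_of_ne h1]
      exact hc i i.isLt
    constructor
    · intro hall
      exact (hstep ∅).mp (hall ∅)
    · intro hh S
      exact (hstep S).mpr hh
termination_by m - j

lemma ext_sat (qt : Fin m → Bool) (nv : ℕ) (cls : List (Clause σ m ar))
    (A : Struct σ) (e : ℕ → A.Dom) :
    KromR.Sat ⟨m + 1, arE ar, Fin.lastCases false qt, nv,
        cls.map liftClauseE⟩ A e ↔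
      KromR.Sat ⟨m, ar, qt, nv, cls⟩ A e := by
  unfold KromR.Sat
  exact ext_satAux qt nv cls A e 0 (Nat.zero_le _) _ _ (by omega)

lemma ext_prefixList (qt : Fin m → Bool) (nv : ℕ) (cls : List (Clause σ m ar)) :
    (⟨m + 1, arE ar, Fin.lastCases false qt, nv,
        cls.map liftClauseE⟩ : KromR σ).prefixList =
      (⟨m, ar, qt, nv, cls⟩ : KromR σ).prefixList ++ [false] := by
  show List.ofFn (Fin.lastCases false qt) = List.ofFn qt ++ [false]
  rw [List.ofFn_succ' (Fin.lastCases false qt), List.concat_eq_append]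
  congr 1
  · exact congrArg List.ofFn (funext fun i => Fin.lastCases_castSucc i)
  · rw [Fin.lastCases_last]

end Ext
section Strip

variable {σ : Vocab}

lemma getLast?_of_head (l : List Bool) (a : Bool) (h : l.head? = some a) :
    l.getLast? = some (if Even (altCount l) then a else !a) := by
  cases l with
  | nil => simp at h
  | cons b t =>
      obtain rfl : b = a := by simpa using h
      exact getLast?_eq_altCount t b

lemma prefixList_nil_of_m_eq_zero (Φ : KromR σ) (h : Φ.m = 0) :
    Φ.prefixList = [] := by
  apply List.eq_nil_of_length_eq_zero
  show (List.ofFn Φ.qt).length = 0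
  rw [List.length_ofFn]
  exact h

/-- Strip all trailing universal quantifiers from the prefix. -/
lemma strip : ∀ (N : ℕ) (Φ : KromR σ), Φ.m ≤ N →
    1 ≤ altCount Φ.prefixList → Φ.prefixList.getLast? = some false →
    ∃ Φ' : KromR σ, Φ'.prefixList.head? = Φ.prefixList.head? ∧
      altCount Φ'.prefixList = altCount Φ.prefixList - 1 ∧
      ∀ (A : Struct σ) (e : ℕ → A.Dom), Φ.Sat A e ↔ Φ'.Sat A e := by
  intro N
  induction N with
  | zero =>
      intro Φ hm h1 h2
      rw [prefixList_nil_of_m_eq_zero Φ (by omega)] at h2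
      simp at h2
  | succ N ih =>
      intro Φ hm h1 h2
      obtain ⟨m, ar, qt, nv, cls⟩ := Φ
      cases m with
      | zero =>
          rw [prefixList_nil_of_m_eq_zero _ rfl] at h2
          simp at h2
      | succ m0 =>
          have hm' : m0 + 1 ≤ N + 1 := hm
          have hpre := elim_prefixList (σ := σ) (ar := ar) qt nv cls
          have hq : qt (Fin.last m0) = false := by
            rw [hpre, List.getLast?_concat] at h2
            exact Option.some.inj h2
          have hsat := elim_sat qt nv cls hq
          cases hl1 : (elimData (σ := σ) (ar := ar) qt nv cls).prefixList with
          | nil =>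
              rw [hpre, hl1] at h1
              simp [altCount] at h1
          | cons a t =>
              have hcat : altCount ((⟨m0 + 1, ar, qt, nv, cls⟩ : KromR σ).prefixList) =
                  altCount (a :: t) +
                    (if (a :: t).getLast? = some false then 0 else 1) := by
                rw [hpre, hl1, hq]
                exact altCount_concat t a false
              have hhead : ((⟨m0 + 1, ar, qt, nv, cls⟩ : KromR σ).prefixList).head? =
                  some a := by
                rw [hpre, hl1, hq]
                simp
              by_cases hlast : (a :: t).getLast? = some false
              · obtain ⟨Φ', hh, ha, hs⟩ := ih (elimData (σ := σ) (ar := ar) qt nv cls)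
                  (by show m0 ≤ N; omega)
                  (by rw [hl1]; rw [hcat, if_pos hlast] at h1; omega)
                  (by rw [hl1]; exact hlast)
                refine ⟨Φ', ?_, ?_, ?_⟩
                · rw [hh, hl1, hhead]; simp
                · rw [ha, hl1, hcat, if_pos hlast]; omega
                · intro A e
                  exact (hsat A e).trans (hs A e)
              · refine ⟨elimData (σ := σ) (ar := ar) qt nv cls, ?_, ?_, ?_⟩
                · rw [hl1, hhead]; simp
                · rw [hl1, hcat, if_neg hlast]; omega
                · exact hsat

end Strip
section Final

variable {σ : Vocab}

lemma dir1 (b : Bool) (k : ℕ) (hpar : ¬ ((if Even (k - 1) then b else !b) = false))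
    (Φ : KromR σ) (hhead : Φ.prefixList.head? = some b)
    (halt : altCount Φ.prefixList = k - 1) (hk : 1 ≤ k) :
    ∃ Ψ : KromR σ, Ψ.prefixList.head? = some b ∧ altCount Ψ.prefixList = k ∧
      ∀ (A : Struct σ) (e : ℕ → A.Dom), Φ.Sat A e ↔ Ψ.Sat A e := by
  obtain ⟨m, ar, qt, nv, cls⟩ := Φ
  obtain ⟨t, hl⟩ : ∃ t, (⟨m, ar, qt, nv, cls⟩ : KromR σ).prefixList = b :: t := by
    cases hc : (⟨m, ar, qt, nv, cls⟩ : KromR σ).prefixList with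
    | nil => rw [hc] at hhead; simp at hhead
    | cons x t =>
        rw [hc] at hhead
        obtain rfl : x = b := by simpa using hhead
        exact ⟨t, rfl⟩
  rw [hl] at halt
  refine ⟨⟨m + 1, arE ar, Fin.lastCases false qt, nv, cls.map liftClauseE⟩,
    ?_, ?_, ?_⟩
  · rw [ext_prefixList, hl]; simp
  · rw [ext_prefixList, hl]
    have hg := getLast?_eq_altCount t b
    rw [halt] at hg
    rw [altCount_concat t b false, halt, hg,
      if_neg (show ¬ (some (if Even (k - 1) then b else !b) = some false) from
        by simpa using hpar)]
    omega
  · intro A e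
    exact (ext_sat qt nv cls A e).symm

lemma dir2 (b : Bool) (k : ℕ) (hpar : (if Even k then b else !b) = false)
    (Ψ : KromR σ) (hhead : Ψ.prefixList.head? = some b)
    (halt : altCount Ψ.prefixList = k) (hk : 1 ≤ k) :
    ∃ Φ : KromR σ, Φ.prefixList.head? = some b ∧
      altCount Φ.prefixList = k - 1 ∧
      ∀ (A : Struct σ) (e : ℕ → A.Dom), Ψ.Sat A e ↔ Φ.Sat A e := by
  have hg : Ψ.prefixList.getLast? = some false := by
    rw [getLast?_of_head _ b hhead, halt, hpar]
  obtain ⟨Φ, hh, ha, hs⟩ := strip Ψ.m Ψ le_rfl (by rw [halt]; omega) hg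
  exact ⟨Φ, by rw [hh, hhead], by rw [ha, halt], hs⟩

end Final

/-- For `k ≥ 1`: if `k` is odd then `Σ¹ₖ`-KROM^r and `Σ¹ₖ₊₁`-KROM^r have the
same expressive power on all finite structures, and if `k` is even then
`Π¹ₖ`-KROM^r and `Π¹ₖ₊₁`-KROM^r have the same expressive power on all finite
structures. -/
theorem kromr_innermost_universal_collapse (σ : Vocab) (k : ℕ) (hk : 1 ≤ k) :
    (Odd k →
      (∀ Φ : KromR σ, Φ.IsSigma k → ∃ Ψ : KromR σ, Ψ.IsSigma (k + 1) ∧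
        ∀ (A : Struct σ) [Fintype A.Dom] [Nonempty A.Dom] (e : ℕ → A.Dom),
          Φ.Sat A e ↔ Ψ.Sat A e) ∧
      (∀ Ψ : KromR σ, Ψ.IsSigma (k + 1) → ∃ Φ : KromR σ, Φ.IsSigma k ∧
        ∀ (A : Struct σ) [Fintype A.Dom] [Nonempty A.Dom] (e : ℕ → A.Dom),
          Ψ.Sat A e ↔ Φ.Sat A e)) ∧
    (Even k →
      (∀ Φ : KromR σ, Φ.IsPi k → ∃ Ψ : KromR σ, Ψ.IsPi (k + 1) ∧
        ∀ (A : Struct σ) [Fintype A.Dom] [Nonempty A.Dom] (e : ℕ → A.Dom),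
          Φ.Sat A e ↔ Ψ.Sat A e) ∧
      (∀ Ψ : KromR σ, Ψ.IsPi (k + 1) → ∃ Φ : KromR σ, Φ.IsPi k ∧
        ∀ (A : Struct σ) [Fintype A.Dom] [Nonempty A.Dom] (e : ℕ → A.Dom),
          Ψ.Sat A e ↔ Φ.Sat A e)) := by
  refine ⟨fun hodd => ⟨?_, ?_⟩, fun heven => ⟨?_, ?_⟩⟩
  · rintro Φ ⟨hhead, halt⟩
    have hpar : ¬ ((if Even (k - 1) then true else !true) = false) := by
      rw [if_pos (Nat.Odd.sub_odd hodd odd_one)]; simp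
    obtain ⟨Ψ, h1, h2, h3⟩ := dir1 true k hpar Φ hhead halt hk
    exact ⟨Ψ, ⟨h1, by rw [h2]; omega⟩, fun A _ _ e => h3 A e⟩
  · rintro Ψ ⟨hhead, halt⟩
    have halt' : altCount Ψ.prefixList = k := by omega
    have hpar : (if Even k then true else !true) = false := by
      rw [if_neg (Nat.not_even_iff_odd.mpr hodd)]; simp
    obtain ⟨Φ, h1, h2, h3⟩ := dir2 true k hpar Ψ hhead halt' hk
    exact ⟨Φ, ⟨h1, h2⟩, fun A _ _ e => h3 A e⟩
  · rintro Φ ⟨hhead, halt⟩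
    have hpar : ¬ ((if Even (k - 1) then false else !false) = false) := by
      rw [if_neg (Nat.not_even_iff_odd.mpr (Nat.Even.sub_odd hk heven odd_one))]
      simp
    obtain ⟨Ψ, h1, h2, h3⟩ := dir1 false k hpar Φ hhead halt hk
    exact ⟨Ψ, ⟨h1, by rw [h2]; omega⟩, fun A _ _ e => h3 A e⟩
  · rintro Ψ ⟨hhead, halt⟩
    have halt' : altCount Ψ.prefixList = k := by omega
    have hpar : (if Even k then false else !false) = false := by
      rw [if_pos heven]
    obtain ⟨Φ, h1, h2, h3⟩ := dir2 false k hpar Ψ hhead halt' hk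
    exact ⟨Φ, ⟨h1, h2⟩, fun A _ _ e => h3 A e⟩

end SOKrom
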